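/- Let c ∈ ℂˣ with c ≠ 1. The intersection in PGL₃(ℂ) of the centralizers of [A] and [B], where A = [[0,1,0],[2,0,0],[0,0,c]] and B = [[1,1,0],[0,1,0],[0,0,c]], equals the image of the subgroup { diag(x, x, 1) : x ∈ ℂˣ } of GL₃(ℂ). In particular this intersection is connected, so the associated component group is trivial. -/

import Mathlib

open Matrix

noncomputable def dmHom : ℂ →* Matrix (Fin 3) (Fin 3) ℂ where
  toFun x := Matrix.diagonal ![x, x, 1]
  map_one' := by
    show Matrix.diagonal ![(1:ℂ),1,1] = 1
    rw [show ![(1:ℂ),1,1] = (fun _ => 1 : Fin 3 → ℂ) from by funext i; fin_cases i <;> rfl]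
    exact Matrix.diagonal_one
  map_mul' x y := by
    show Matrix.diagonal _ = Matrix.diagonal _ * Matrix.diagonal _
    rw [Matrix.diagonal_mul_diagonal,
      show (![x*y, x*y, 1] : Fin 3 → ℂ) = fun i => ![x,x,1] i * ![y,y,1] i from by
        funext i; fin_cases i <;> simp]

lemma mem_center_GL3 (X : GL (Fin 3) ℂ) :
    X ∈ Subgroup.center (GL (Fin 3) ℂ) ↔
      ∃ r : ℂ, r ≠ 0 ∧ (X : Matrix (Fin 3) (Fin 3) ℂ) = r • 1 := by
  constructor
  · intro h
    have h' := Subgroup.mem_center_iff.mp h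
    have hcomm : ∀ t : TransvectionStruct (Fin 3) ℂ,
        Commute t.toMatrix (X : Matrix (Fin 3) (Fin 3) ℂ) := by
      intro t
      have := congrArg (fun g : GL (Fin 3) ℂ => (g : Matrix (Fin 3) (Fin 3) ℂ))
        (h' ⟨t.toMatrix, t.inv.toMatrix, t.mul_inv, t.inv_mul⟩)
      exact this
    obtain ⟨r, hr⟩ := Matrix.mem_range_scalar_of_commute_transvectionStruct hcomm
    have hscal : Matrix.scalar (Fin 3) r = r • (1 : Matrix (Fin 3) (Fin 3) ℂ) := by
      ext i j
      by_cases hij : i = j <;>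
        simp [Matrix.scalar_apply, Matrix.diagonal, Matrix.one_apply, hij]
    refine ⟨r, ?_, by rw [← hr, hscal]⟩
    intro hr0
    have h1 : (X : Matrix (Fin 3) (Fin 3) ℂ) * ((X⁻¹ : GL (Fin 3) ℂ) : Matrix (Fin 3) (Fin 3) ℂ) = 1 :=
      X.mul_inv
    rw [← hr, hscal, hr0, zero_smul, zero_mul] at h1
    exact zero_ne_one (α := ℂ) (by simpa using congrFun (congrFun h1 0) 0)
  · rintro ⟨r, hr0, hX⟩
    refine Subgroup.mem_center_iff.mpr fun g => Units.ext ?_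
    show (g : Matrix (Fin 3) (Fin 3) ℂ) * X = (X : Matrix (Fin 3) (Fin 3) ℂ) * g
    rw [hX, mul_smul_comm, smul_mul_assoc, mul_one, one_mul]

noncomputable def sUnit (r : ℂ) (hr : r ≠ 0) : GL (Fin 3) ℂ :=
  ⟨r • 1, r⁻¹ • 1, by rw [smul_mul_assoc, mul_smul_comm, one_mul, smul_smul,
      mul_inv_cancel₀ hr, one_smul], by rw [smul_mul_assoc, mul_smul_comm, one_mul, smul_smul,
      inv_mul_cancel₀ hr, one_smul]⟩

lemma sUnit_center (r : ℂ) (hr : r ≠ 0) : sUnit r hr ∈ Subgroup.center (GL (Fin 3) ℂ) :=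
  (mem_center_GL3 _).mpr ⟨r, hr, rfl⟩

lemma centralizer_iff (Aa X : GL (Fin 3) ℂ) :
    (QuotientGroup.mk' (Subgroup.center (GL (Fin 3) ℂ)) X) ∈
      Subgroup.centralizer {QuotientGroup.mk' (Subgroup.center (GL (Fin 3) ℂ)) Aa} ↔
    ∃ r : ℂ, r ≠ 0 ∧ (X : Matrix (Fin 3) (Fin 3) ℂ) * Aa =
      r • ((Aa : Matrix (Fin 3) (Fin 3) ℂ) * X) := by
  rw [Subgroup.mem_centralizer_iff]
  constructor
  · intro h
    have h2 := h _ (Set.mem_singleton _)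
    rw [← _root_.map_mul, ← _root_.map_mul, QuotientGroup.mk'_eq_mk'] at h2
    obtain ⟨z, hz, hzeq⟩ := h2
    obtain ⟨r, hr0, hrval⟩ := (mem_center_GL3 z).mp hz
    refine ⟨r, hr0, ?_⟩
    have h3 := congrArg Units.val hzeq
    rw [Units.val_mul, Units.val_mul, Units.val_mul, hrval] at h3
    rw [← h3, mul_smul_comm, mul_one]
  · rintro ⟨r, hr0, hXA⟩ g hg
    rw [Set.mem_singleton_iff] at hg; subst hg
    rw [← _root_.map_mul, ← _root_.map_mul, QuotientGroup.mk'_eq_mk']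
    refine ⟨sUnit r hr0, sUnit_center r hr0, Units.ext ?_⟩
    show ((Aa : Matrix (Fin 3) (Fin 3) ℂ) * X) * (r • 1) = (X : Matrix (Fin 3) (Fin 3) ℂ) * Aa
    rw [mul_smul_comm, mul_one, ← hXA]

lemma hfac {x y : ℂ} (hxy : x * y = 0) (hx : x ≠ 0) : y = 0 :=
  (mul_eq_zero.mp hxy).resolve_left hx

lemma crunch (c : ℂ) (hc : c ≠ 0) (hc1 : c ≠ 1) (M : Matrix (Fin 3) (Fin 3) ℂ)
    (hdet : M.det ≠ 0) (r s : ℂ)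
    (hXA : M * !![0,1,0;2,0,0;0,0,c] = r • (!![0,1,0;2,0,0;0,0,c] * M))
    (hXB : M * !![1,1,0;0,1,0;0,0,c] = s • (!![1,1,0;0,1,0;0,0,c] * M)) :
    ∃ a h : ℂ, a ≠ 0 ∧ h ≠ 0 ∧ M = Matrix.diagonal ![a, a, h] := by
  have kB : ∀ i j, (M * !![1,1,0;0,1,0;0,0,c]) i j
      = s * ((!![1,1,0;0,1,0;0,0,c] * M) i j) := by
    intro i j; rw [hXB]; simp
  have kA : ∀ i j, (M * !![0,1,0;2,0,0;0,0,c]) i j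
      = r * ((!![0,1,0;2,0,0;0,0,c] * M) i j) := by
    intro i j; rw [hXA]; simp
  rw [Matrix.det_fin_three] at hdet
  have b00 := kB 0 0; have b01 := kB 0 1; have b02 := kB 0 2
  have b10 := kB 1 0; have b11 := kB 1 1; have b12 := kB 1 2
  have b20 := kB 2 0; have b21 := kB 2 1; have b22 := kB 2 2
  have a00 := kA 0 0
  simp [Matrix.mul_apply, Fin.sum_univ_three, Matrix.vecHead, Matrix.vecTail]
    at b00 b01 b02 b10 b11 b12 b20 b21 b22 a00
  by_cases hs : s = 1
  · subst hs
    have hc1' : c - 1 ≠ 0 := sub_ne_zero.mpr hc1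
    have h10 : M 1 0 = 0 := by linear_combination -b00
    have h11 : M 1 1 = M 0 0 := by linear_combination -b01
    have h12 : M 1 2 = 0 := hfac (y := M 1 2) (by linear_combination b12) hc1'
    have h02 : M 0 2 = 0 := hfac (y := M 0 2) (by linear_combination b02 + h12) hc1'
    have h20 : M 2 0 = 0 := hfac (y := M 2 0) (by linear_combination -b20) hc1'
    have h21 : M 2 1 = 0 := hfac (y := M 2 1) (by linear_combination -b21 + h20) hc1'
    have h01 : M 0 1 = 0 := by linear_combination a00 / 2 + r * h10 / 2
    have hM00 : M 0 0 ≠ 0 := by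
      intro h0; apply hdet; rw [h10, h01, h12, h02, h20, h21, h11, h0]; ring
    have hM22 : M 2 2 ≠ 0 := by
      intro h0; apply hdet; rw [h10, h01, h12, h02, h20, h21, h0]; ring
    refine ⟨M 0 0, M 2 2, hM00, hM22, ?_⟩
    ext i j
    fin_cases i <;> fin_cases j <;>
      simp [Matrix.diagonal, h01, h10, h12, h02, h20, h21, h11]
  · have hs' : s - 1 ≠ 0 := sub_ne_zero.mpr hs
    have h10 : M 1 0 = 0 := hfac (y := M 1 0) (by linear_combination -b10) hs'
    have h11 : M 1 1 = 0 := hfac (y := M 1 1) (by linear_combination -b11 + h10) hs'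
    have h00 : M 0 0 = 0 := hfac (y := M 0 0) (by linear_combination -b00 - s * h10) hs'
    have h01 : M 0 1 = 0 := hfac (y := M 0 1) (by linear_combination -b01 + h00 - s * h11) hs'
    have h22 : M 2 2 = 0 := hfac (y := M 2 2)
      (hfac (y := c * M 2 2) (by linear_combination -b22) hs') hc
    exact absurd (by rw [h00, h01, h10, h11, h22]; ring) hdet

lemma dmHom_cont : Continuous (⇑dmHom) := by
  have h : ⇑dmHom = fun x : ℂ => x • Matrix.diagonal ![(1:ℂ),1,0] + Matrix.diagonal ![0,0,1] := by
    funext x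
    show Matrix.diagonal ![x,x,1] = _
    rw [← Matrix.diagonal_smul, Matrix.diagonal_add,
      show (fun i => (x • ![(1:ℂ),1,0]) i + ![0,0,1] i) = ![x,x,1] from by
        funext i; fin_cases i <;> simp]
  rw [h]
  exact (continuous_id.smul continuous_const).add continuous_const

lemma range_lemma : {X : GL (Fin 3) ℂ | ∃ x : ℂ, x ≠ 0 ∧
    (X : Matrix (Fin 3) (Fin 3) ℂ) = Matrix.diagonal ![x, x, 1]} =
    Set.range (⇑(Units.map dmHom) : ℂˣ → GL (Fin 3) ℂ) := by
  ext X
  constructor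
  · rintro ⟨x, hx, hX⟩
    exact ⟨Units.mk0 x hx, Units.ext hX.symm⟩
  · rintro ⟨u, rfl⟩
    exact ⟨(u : ℂ), u.ne_zero, rfl⟩

lemma units_univ_conn : IsConnected (Set.univ : Set ℂˣ) := by
  have hcompl : IsConnected ({(0:ℂ)}ᶜ) :=
    isConnected_compl_singleton_of_one_lt_rank (by simp) 0
  have himg : (Units.val '' (Set.univ : Set ℂˣ)) = {(0:ℂ)}ᶜ := by
    ext z
    simp only [Set.image_univ, Set.mem_range, Set.mem_compl_iff, Set.mem_singleton_iff]
    exact ⟨fun ⟨u, hu⟩ => hu ▸ u.ne_zero, fun hz => ⟨Units.mk0 z hz, rfl⟩⟩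
  exact ⟨⟨1, trivial⟩,
    Units.isEmbedding_val₀.toIsInducing.isPreconnected_image.mp
      (himg ▸ hcompl.isPreconnected)⟩

/-- For `c ∈ ℂˣ`, `c ≠ 1`, `A = [[0,1,0],[2,0,0],[0,0,c]]` and
`B = [[1,1,0],[0,1,0],[0,0,c]]`, the intersection in `PGL₃(ℂ)` of the centralizers of
`[A]` and `[B]` is the image of `{diag(x,x,1) : x ∈ ℂˣ}`, and it is connected (so the
associated component group is trivial). -/
theorem stmt13 (c : ℂ) (hc : c ≠ 0) (hc1 : c ≠ 1)
    (A B : GL (Fin 3) ℂ)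
    (hA : (A : Matrix (Fin 3) (Fin 3) ℂ) = !![0, 1, 0; 2, 0, 0; 0, 0, c])
    (hB : (B : Matrix (Fin 3) (Fin 3) ℂ) = !![1, 1, 0; 0, 1, 0; 0, 0, c]) :
    ((Subgroup.centralizer {QuotientGroup.mk' (Subgroup.center (GL (Fin 3) ℂ)) A} ⊓
        Subgroup.centralizer {QuotientGroup.mk' (Subgroup.center (GL (Fin 3) ℂ)) B} :
        Subgroup ((GL (Fin 3) ℂ) ⧸ Subgroup.center (GL (Fin 3) ℂ))) :
        Set ((GL (Fin 3) ℂ) ⧸ Subgroup.center (GL (Fin 3) ℂ))) =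
      (QuotientGroup.mk' (Subgroup.center (GL (Fin 3) ℂ))) ''
        {X : GL (Fin 3) ℂ | ∃ x : ℂ, x ≠ 0 ∧
          (X : Matrix (Fin 3) (Fin 3) ℂ) = Matrix.diagonal ![x, x, 1]} ∧
    IsConnected
      ((Subgroup.centralizer {QuotientGroup.mk' (Subgroup.center (GL (Fin 3) ℂ)) A} ⊓
        Subgroup.centralizer {QuotientGroup.mk' (Subgroup.center (GL (Fin 3) ℂ)) B} :
        Subgroup ((GL (Fin 3) ℂ) ⧸ Subgroup.center (GL (Fin 3) ℂ))) :
        Set ((GL (Fin 3) ℂ) ⧸ Subgroup.center (GL (Fin 3) ℂ))) := by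
  have heq : ((Subgroup.centralizer {QuotientGroup.mk' (Subgroup.center (GL (Fin 3) ℂ)) A} ⊓
        Subgroup.centralizer {QuotientGroup.mk' (Subgroup.center (GL (Fin 3) ℂ)) B} :
        Subgroup ((GL (Fin 3) ℂ) ⧸ Subgroup.center (GL (Fin 3) ℂ))) :
        Set ((GL (Fin 3) ℂ) ⧸ Subgroup.center (GL (Fin 3) ℂ))) =
      (QuotientGroup.mk' (Subgroup.center (GL (Fin 3) ℂ))) ''
        {X : GL (Fin 3) ℂ | ∃ x : ℂ, x ≠ 0 ∧
          (X : Matrix (Fin 3) (Fin 3) ℂ) = Matrix.diagonal ![x, x, 1]} := by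
    ext q
    obtain ⟨X, rfl⟩ := QuotientGroup.mk'_surjective (Subgroup.center (GL (Fin 3) ℂ)) q
    simp only [SetLike.mem_coe, Subgroup.mem_inf]
    constructor
    · rintro ⟨h1, h2⟩
      obtain ⟨rr, hrr, hXA⟩ := (centralizer_iff A X).mp h1
      obtain ⟨ss, hss, hXB⟩ := (centralizer_iff B X).mp h2
      rw [hA] at hXA
      rw [hB] at hXB
      have hdet : ((X : Matrix (Fin 3) (Fin 3) ℂ)).det ≠ 0 :=
        ((Matrix.isUnit_iff_isUnit_det _).mp X.isUnit).ne_zero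
      obtain ⟨a, h, ha, hh, hM⟩ := crunch c hc hc1 _ hdet rr ss hXA hXB
      refine ⟨Units.map dmHom (Units.mk0 (a/h) (div_ne_zero ha hh)),
        ⟨a/h, div_ne_zero ha hh, rfl⟩, ?_⟩
      rw [QuotientGroup.mk'_eq_mk']
      refine ⟨sUnit h hh, sUnit_center h hh, Units.ext ?_⟩
      show (Matrix.diagonal ![a/h, a/h, 1]) * ((h : ℂ) • 1) = (X : Matrix (Fin 3) (Fin 3) ℂ)
      rw [hM, mul_smul_comm, mul_one, ← Matrix.diagonal_smul,
        show (h • ![a/h, a/h, (1:ℂ)]) = ![a, a, h] from by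
          funext i; fin_cases i <;> simp <;> field_simp]
    · rintro ⟨X', hX', hmk⟩
      obtain ⟨x, hx, hval⟩ := hX'
      rw [← hmk]
      constructor
      · refine (centralizer_iff A X').mpr ⟨1, one_ne_zero, ?_⟩
        rw [one_smul, hval, hA]
        ext i j
        fin_cases i <;> fin_cases j <;>
          simp [Matrix.mul_apply, Fin.sum_univ_three, Matrix.diagonal, Matrix.vecHead, Matrix.vecTail, mul_comm]
      · refine (centralizer_iff B X').mpr ⟨1, one_ne_zero, ?_⟩
        rw [one_smul, hval, hB]
        ext i j
        fin_cases i <;> fin_cases j <;>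
          simp [Matrix.mul_apply, Fin.sum_univ_three, Matrix.diagonal, Matrix.vecHead, Matrix.vecTail, mul_comm]
  refine ⟨heq, ?_⟩
  rw [heq, range_lemma, ← Set.range_comp, ← Set.image_univ]
  exact units_univ_conn.image _
    ((QuotientGroup.continuous_mk.comp (Continuous.units_map dmHom dmHom_cont)).continuousOn)
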